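/- Let Σ be symmetric with top-k projector Π* and eigengap γ = λ_k − λ_{k+1} > 0. For any X ∈ F^k, ⟨Σ, Π* − X⟩ ≥ 0, i.e., Π* maximizes the linear functional ⟨Σ, ·⟩ over the Fantope; moreover ⟨Σ, Π* − X⟩ ≥ (γ/2)‖Π* − X‖_F², so if ⟨Σ, Π* − X⟩ = 0 then X = Π*. -/

import Mathlib

open Matrix BigOperators Finset

noncomputable def fip {p : ℕ} (A B : Matrix (Fin p) (Fin p) ℝ) : ℝ := (Aᵀ * B).trace

noncomputable def fnorm {p : ℕ} (A : Matrix (Fin p) (Fin p) ℝ) : ℝ :=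
  Real.sqrt (∑ i, ∑ j, (A i j) ^ 2)

def Fantope {p : ℕ} (k : ℕ) (X : Matrix (Fin p) (Fin p) ℝ) : Prop :=
  X.IsSymm ∧ X.PosSemidef ∧ (1 - X).PosSemidef ∧ X.trace = (k : ℝ)

/-- The orthogonal projector onto the span of the top-`k` eigenvectors. -/
def topProj {p : ℕ} (k : ℕ) (u : Fin p → Fin p → ℝ) : Matrix (Fin p) (Fin p) ℝ :=
  ∑ i ∈ Finset.univ.filter (fun i : Fin p => (i : ℕ) < k), vecMulVec (u i) (u i)

section Aux

variable {p : ℕ}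

lemma fip_comm (A B : Matrix (Fin p) (Fin p) ℝ) : fip A B = fip B A := by
  unfold fip
  rw [← Matrix.trace_transpose, Matrix.transpose_mul, Matrix.transpose_transpose]

lemma fip_sub_right (A B C : Matrix (Fin p) (Fin p) ℝ) :
    fip A (B - C) = fip A B - fip A C := by
  simp [fip, Matrix.mul_sub]

lemma fip_sub_left (A B C : Matrix (Fin p) (Fin p) ℝ) :
    fip (A - B) C = fip A C - fip B C := by
  simp [fip, Matrix.transpose_sub, Matrix.sub_mul]

lemma trace_vecMulVec_mul (v w : Fin p → ℝ) (M : Matrix (Fin p) (Fin p) ℝ) :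
    ((vecMulVec v w) * M).trace = w ⬝ᵥ (M *ᵥ v) := by
  simp only [Matrix.trace, Matrix.diag, Matrix.mul_apply, vecMulVec_apply, dotProduct,
    mulVec, Finset.mul_sum]
  rw [Finset.sum_comm]
  exact Finset.sum_congr rfl fun b _ => Finset.sum_congr rfl fun a _ => by ring

lemma psd_trace_nonneg (M : Matrix (Fin p) (Fin p) ℝ) (hM : M.PosSemidef) : 0 ≤ M.trace := by
  rw [Matrix.trace]
  refine Finset.sum_nonneg fun i _ => ?_
  have h := hM.dotProduct_mulVec_nonneg (Pi.single i 1)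
  simpa [Matrix.diag, dotProduct, mulVec, Pi.single_apply, Finset.mul_sum,
    Finset.sum_ite_eq, Finset.sum_ite_eq'] using h

lemma fip_self_eq_sum_sq (A : Matrix (Fin p) (Fin p) ℝ) :
    fip A A = ∑ i, ∑ j, (A i j) ^ 2 := by
  simp only [fip, Matrix.trace, Matrix.diag, Matrix.mul_apply, Matrix.transpose_apply]
  rw [Finset.sum_comm]
  exact Finset.sum_congr rfl fun i _ => Finset.sum_congr rfl fun j _ => by ring

lemma sum_mulVec' {ι : Type*} (s : Finset ι) (f : ι → Matrix (Fin p) (Fin p) ℝ)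
    (v : Fin p → ℝ) : (∑ j ∈ s, f j) *ᵥ v = ∑ j ∈ s, (f j *ᵥ v) := by
  ext a
  simp only [mulVec, dotProduct, Finset.sum_apply, Matrix.sum_apply, Finset.sum_mul]
  rw [Finset.sum_comm]

lemma dotProduct_sum' {ι : Type*} (s : Finset ι) (v : Fin p → ℝ) (w : ι → Fin p → ℝ) :
    v ⬝ᵥ (∑ j ∈ s, w j) = ∑ j ∈ s, v ⬝ᵥ (w j) := by
  simp only [dotProduct, Finset.sum_apply, Finset.mul_sum]
  rw [Finset.sum_comm]

lemma fnorm_sq (A : Matrix (Fin p) (Fin p) ℝ) : fnorm A ^ 2 = fip A A := by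
  rw [fnorm, Real.sq_sqrt, fip_self_eq_sum_sq]
  positivity

end Aux

/-- with eigengap γ = λ_k − λ_{k+1} > 0, the top-k projector Π*
maximizes ⟨Σ, ·⟩ over the Fantope: for any X ∈ F^k, ⟨Σ, Π* − X⟩ ≥ 0, and moreover
⟨Σ, Π* − X⟩ ≥ (γ/2)‖Π* − X‖_F², so ⟨Σ, Π* − X⟩ = 0 forces X = Π*. -/
theorem top_projector_unique_maximizer (p k : ℕ) (hk : 0 < k) (hkp : k < p)
    (Sig : Matrix (Fin p) (Fin p) ℝ) (l : Fin p → ℝ) (u : Fin p → Fin p → ℝ)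
    (hdecomp : Sig = ∑ i, l i • vecMulVec (u i) (u i))
    (horth : ∀ i j, u i ⬝ᵥ u j = if i = j then (1 : ℝ) else 0)
    (hl : Antitone l)
    (hgap : l ⟨k, hkp⟩ < l ⟨k - 1, by omega⟩) :
    ∀ X : Matrix (Fin p) (Fin p) ℝ, Fantope k X →
      0 ≤ fip Sig (topProj k u - X) ∧
      (l ⟨k - 1, by omega⟩ - l ⟨k, hkp⟩) / 2 * fnorm (topProj k u - X) ^ 2 ≤
        fip Sig (topProj k u - X) ∧
      (fip Sig (topProj k u - X) = 0 → X = topProj k u) := by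
  intro X hX
  obtain ⟨hXsymm, hXpsd, hXpsd', hXtr⟩ := hX
  set γ : ℝ := l ⟨k - 1, by omega⟩ - l ⟨k, hkp⟩ with hγdef
  have hγ : 0 < γ := sub_pos.mpr hgap
  set Fk : Finset (Fin p) := Finset.univ.filter (fun i : Fin p => (i : ℕ) < k) with hFk
  -- completeness : ∑ i, u_i u_iᵀ = 1
  have hUUt : (Matrix.of u) * (Matrix.of u)ᵀ = 1 := by
    ext i j
    simpa [Matrix.mul_apply, Matrix.one_apply, dotProduct] using horth i j
  have hUtU : (Matrix.of u)ᵀ * (Matrix.of u) = 1 := mul_eq_one_comm.mp hUUt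
  have hcomp : (∑ i, vecMulVec (u i) (u i)) = (1 : Matrix (Fin p) (Fin p) ℝ) := by
    rw [← hUtU]; ext a b
    simp [Matrix.mul_apply, Matrix.sum_apply, vecMulVec_apply, mul_comm]
  -- y i = u_iᵀ X u_i
  set y : Fin p → ℝ := fun i => u i ⬝ᵥ (X *ᵥ u i) with hy
  have hy0 : ∀ i, 0 ≤ y i := fun i => by simpa using hXpsd.dotProduct_mulVec_nonneg (u i)
  have hy1 : ∀ i, y i ≤ 1 := by
    intro i
    have h := hXpsd'.dotProduct_mulVec_nonneg (u i)
    have : (0:ℝ) ≤ u i ⬝ᵥ ((1 - X) *ᵥ u i) := by simpa using h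
    rw [Matrix.sub_mulVec, Matrix.one_mulVec, dotProduct_sub, horth i i] at this
    simp only [if_pos rfl, eq_self_iff_true, if_true] at this
    linarith [this]
  -- ∑ y = k
  have hysum : ∑ i, y i = (k : ℝ) := by
    have : ∑ i, y i = ((∑ i, vecMulVec (u i) (u i)) * X).trace := by
      rw [Finset.sum_mul, Matrix.trace_sum]
      exact Finset.sum_congr rfl fun i _ => (trace_vecMulVec_mul (u i) (u i) X).symm
    rw [this, hcomp, Matrix.one_mul, hXtr]
  -- fip Sig M = ∑ i, l i * (u i ⬝ᵥ M *ᵥ u i)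
  have hfipSig : ∀ M : Matrix (Fin p) (Fin p) ℝ,
      fip Sig M = ∑ i, l i * (u i ⬝ᵥ (M *ᵥ u i)) := by
    intro M
    have hSigT : Sigᵀ = Sig := by
      rw [hdecomp]; ext a b
      simp only [Matrix.transpose_apply, Matrix.sum_apply, Matrix.smul_apply,
        vecMulVec_apply, smul_eq_mul]
      exact Finset.sum_congr rfl fun i _ => by ring
    rw [fip, hSigT, hdecomp, Finset.sum_mul, Matrix.trace_sum]
    exact Finset.sum_congr rfl fun i _ => by
      rw [Matrix.smul_mul, Matrix.trace_smul, trace_vecMulVec_mul, smul_eq_mul]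
  have hfipPi : ∀ M : Matrix (Fin p) (Fin p) ℝ,
      fip (topProj k u) M = ∑ i ∈ Fk, (u i ⬝ᵥ (M *ᵥ u i)) := by
    intro M
    have hPiT : (topProj k u)ᵀ = topProj k u := by
      unfold topProj; ext a b
      simp only [Matrix.transpose_apply, Matrix.sum_apply, vecMulVec_apply]
      exact Finset.sum_congr rfl fun i _ => by ring
    rw [fip, hPiT, topProj, Finset.sum_mul, Matrix.trace_sum]
    exact Finset.sum_congr rfl fun i _ => trace_vecMulVec_mul (u i) (u i) M
  -- Π *ᵥ u i
  have hPiu : ∀ i : Fin p, u i ⬝ᵥ (topProj k u *ᵥ u i) = if (i : ℕ) < k then 1 else 0 := by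
    intro i
    rw [topProj, sum_mulVec']
    have h1 : ∀ j : Fin p, u i ⬝ᵥ (vecMulVec (u j) (u j) *ᵥ u i)
        = if j = i then (1:ℝ) else 0 := by
      intro j
      have : vecMulVec (u j) (u j) *ᵥ u i = (u j ⬝ᵥ u i) • u j := by
        ext a; simp [mulVec, vecMulVec_apply, dotProduct, Finset.mul_sum, mul_comm,
          mul_left_comm]
      rw [this, dotProduct_smul, horth i j, horth j i, smul_eq_mul]
      by_cases h : i = j <;> simp [h, eq_comm]
    rw [dotProduct_sum', Finset.sum_congr rfl fun j _ => h1 j, Finset.sum_ite_eq']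
    simp [hFk, Finset.mem_filter]
  -- card of Fk
  have hcard : (Fk.card : ℝ) = (k : ℝ) := by
    have : Fk.card = k := by
      rw [hFk]
      rw [show (Finset.univ.filter (fun i : Fin p => (i : ℕ) < k))
          = Finset.univ.map (Fin.castLEEmb hkp.le) from ?_]
      · simp
      · ext i
        simp only [Finset.mem_filter, Finset.mem_univ, true_and, Finset.mem_map,
          Fin.castLEEmb_apply]
        constructor
        · intro h; exact ⟨⟨i, h⟩, rfl⟩
        · rintro ⟨j, rfl⟩; exact j.2
    rw [this]
  -- key values
  have hSigPi : fip Sig (topProj k u) = ∑ i ∈ Fk, l i := by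
    rw [hfipSig]
    rw [Finset.sum_congr rfl fun i _ => by rw [hPiu i]]
    rw [← Finset.sum_filter_add_sum_filter_not Finset.univ (fun i : Fin p => (i : ℕ) < k)]
    rw [← hFk]
    have h2 : ∑ i ∈ Finset.univ.filter (fun i : Fin p => ¬ (i : ℕ) < k),
        l i * (if (i : ℕ) < k then (1:ℝ) else 0) = 0 := by
      refine Finset.sum_eq_zero fun i hi => ?_
      rw [Finset.mem_filter] at hi
      simp [hi.2]
    rw [h2, add_zero]
    refine Finset.sum_congr rfl fun i hi => ?_
    rw [hFk, Finset.mem_filter] at hi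
    simp [hi.2]
  have hSigX : fip Sig X = ∑ i, l i * y i := hfipSig X
  have hPiPi : fip (topProj k u) (topProj k u) = (k : ℝ) := by
    rw [hfipPi]
    rw [Finset.sum_congr rfl fun i hi => by rw [hPiu i]]
    rw [Finset.sum_congr rfl fun i hi => ?_, Finset.sum_const, nsmul_eq_mul, mul_one, hcard]
    rw [hFk, Finset.mem_filter] at hi
    simp [hi.2]
  have hPiX : fip (topProj k u) X = ∑ i ∈ Fk, y i := hfipPi X
  -- trace(X*X) ≤ k
  have hXX : fip X X ≤ (k : ℝ) := by
    open MatrixOrder in obtain ⟨B, hB⟩ := CStarAlgebra.nonneg_iff_eq_star_mul_self.mp hXpsd.nonneg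
    have hBpsd : (B * (1 - X) * Bᴴ).PosSemidef := hXpsd'.mul_mul_conjTranspose_same B
    have htr : 0 ≤ (B * (1 - X) * Bᴴ).trace := psd_trace_nonneg _ hBpsd
    rw [Matrix.trace_mul_cycle] at htr
    have hXe : Bᴴ * B = X := hB.symm
    rw [Matrix.mul_sub, Matrix.mul_one, hXe, Matrix.trace_sub] at htr
    have hfipXX : fip X X = (X * X).trace := by
      rw [fip, show Xᵀ = X from hXsymm]
    rw [hfipXX]
    linarith [htr, hXtr.le, hXtr.ge]
  -- S and sums
  set S : ℝ := (k : ℝ) - ∑ i ∈ Fk, y i with hS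
  have hSalt : ∑ i ∈ Fk, (1 - y i) = S := by
    rw [Finset.sum_sub_distrib, Finset.sum_const, nsmul_eq_mul, mul_one, hcard]
  have hSnonneg : 0 ≤ S := by
    rw [← hSalt]
    exact Finset.sum_nonneg fun i _ => by linarith [hy1 i]
  have hScompl : ∑ i ∈ Finset.univ.filter (fun i : Fin p => ¬ (i : ℕ) < k), y i = S := by
    have := Finset.sum_filter_add_sum_filter_not Finset.univ
      (fun i : Fin p => (i : ℕ) < k) y
    rw [← hFk] at this
    rw [hysum] at this
    linarith [this]
  -- fip Sig (Π - X) = ∑_{Fk} l i (1 - y i) - ∑_{¬} l i y i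
  have hmain : fip Sig (topProj k u - X)
      = ∑ i ∈ Fk, l i * (1 - y i)
        - ∑ i ∈ Finset.univ.filter (fun i : Fin p => ¬ (i : ℕ) < k), l i * y i := by
    have hsplit : ∑ i, l i * y i
        = ∑ i ∈ Fk, l i * y i
          + ∑ i ∈ Finset.univ.filter (fun i : Fin p => ¬ (i : ℕ) < k), l i * y i := by
      rw [hFk]
      exact (Finset.sum_filter_add_sum_filter_not Finset.univ
        (fun i : Fin p => (i : ℕ) < k) (fun i => l i * y i)).symm
    have hdist : ∑ i ∈ Fk, l i * (1 - y i) = ∑ i ∈ Fk, l i - ∑ i ∈ Fk, l i * y i := by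
      rw [← Finset.sum_sub_distrib]
      exact Finset.sum_congr rfl fun i _ => by ring
    rw [fip_sub_right, hSigPi, hSigX, hsplit, hdist]
    ring
  -- lower bound : fip ≥ γ S
  have hlow : γ * S ≤ fip Sig (topProj k u - X) := by
    rw [hmain]
    have h1 : ∑ i ∈ Fk, (l ⟨k - 1, by omega⟩) * (1 - y i) ≤ ∑ i ∈ Fk, l i * (1 - y i) := by
      refine Finset.sum_le_sum fun i hi => ?_
      rw [hFk, Finset.mem_filter] at hi
      have : l ⟨k - 1, by omega⟩ ≤ l i := hl (by
        show (i : ℕ) ≤ k - 1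
        omega)
      nlinarith [hy1 i]
    have h2 : ∑ i ∈ Finset.univ.filter (fun i : Fin p => ¬ (i : ℕ) < k), l i * y i
        ≤ ∑ i ∈ Finset.univ.filter (fun i : Fin p => ¬ (i : ℕ) < k), (l ⟨k, hkp⟩) * y i := by
      refine Finset.sum_le_sum fun i hi => ?_
      rw [Finset.mem_filter] at hi
      have : l i ≤ l ⟨k, hkp⟩ := hl (by
        show (k : ℕ) ≤ (i : ℕ)
        omega)
      nlinarith [hy0 i]
    rw [← Finset.mul_sum, hSalt] at h1
    rw [← Finset.mul_sum, hScompl] at h2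
    have : γ * S = l ⟨k - 1, by omega⟩ * S - l ⟨k, hkp⟩ * S := by rw [hγdef]; ring
    linarith
  -- norm bound : fnorm² ≤ 2 S
  have hnorm : fnorm (topProj k u - X) ^ 2 ≤ 2 * S := by
    rw [fnorm_sq]
    have : fip (topProj k u - X) (topProj k u - X)
        = fip (topProj k u) (topProj k u) - 2 * fip (topProj k u) X + fip X X := by
      rw [fip_sub_left, fip_sub_right, fip_sub_right, fip_comm X (topProj k u)]
      ring
    rw [this, hPiPi, hPiX]
    have : S = (k:ℝ) - ∑ i ∈ Fk, y i := hS
    linarith [hXX]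
  have hkey : γ / 2 * fnorm (topProj k u - X) ^ 2 ≤ fip Sig (topProj k u - X) := by
    have : γ / 2 * fnorm (topProj k u - X) ^ 2 ≤ γ / 2 * (2 * S) := by
      apply mul_le_mul_of_nonneg_left hnorm
      linarith
    calc γ / 2 * fnorm (topProj k u - X) ^ 2 ≤ γ / 2 * (2 * S) := this
      _ = γ * S := by ring
      _ ≤ _ := hlow
  have hnn : 0 ≤ fnorm (topProj k u - X) ^ 2 := sq_nonneg _
  have hprod : 0 ≤ γ / 2 * fnorm (topProj k u - X) ^ 2 :=
    mul_nonneg (by linarith) hnn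
  refine ⟨le_trans hprod hkey, hkey, ?_⟩
  intro hzero
  have h1 : γ / 2 * fnorm (topProj k u - X) ^ 2 ≤ 0 := by
    rw [← hzero]; exact hkey
  have h2 : γ / 2 * fnorm (topProj k u - X) ^ 2 = 0 := le_antisymm h1 hprod
  have hzero2 : fnorm (topProj k u - X) ^ 2 = 0 := by
    rcases mul_eq_zero.mp h2 with h | h
    · exfalso; linarith
    · exact h
  rw [fnorm_sq, fip_self_eq_sum_sq] at hzero2
  have hij : ∀ i j, (topProj k u - X) i j = 0 := by
    intro i j
    have h1 := (Finset.sum_eq_zero_iff_of_nonneg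
      (fun i _ => Finset.sum_nonneg fun j _ => sq_nonneg _)).mp hzero2 i (Finset.mem_univ i)
    have h2 := (Finset.sum_eq_zero_iff_of_nonneg
      (fun j _ => sq_nonneg _)).mp h1 j (Finset.mem_univ j)
    exact pow_eq_zero_iff (by norm_num) |>.mp h2
  ext i j
  have := hij i j
  simp only [Matrix.sub_apply] at this
  linarith
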